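/- Let k ≥ 1 and let real numbers {γ_j}_{j=1}^k, {η_j}_{j=1}^k, {α_j}_{j=0}^k, σ ≥ 0, δ ≥ 0, and γ̲ > 0 satisfy γ_j ≥ γ̲ and γ_jη_j ≤ α_{j−1} − (1+σ)α_j + γ_jδ for every j = 1, …, k. Then min over 1 ≤ j ≤ k of η_j ≤ (α₀ − (1+σ)^k α_k) / (Σ_{j=1}^k (1+σ)^{j−1} γ_j) + δ. -/
import Mathlib


/-- Lemma `lm:easyrecur1`(a): a recursive estimate for sequences
satisfying `γ_j η_j ≤ α_{j−1} − (1+σ)α_j + γ_j δ`. -/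
theorem easy_recursion_min_bound
    (k : ℕ) (hk : 1 ≤ k) (γ η α : ℕ → ℝ) (σ δ γl : ℝ)
    (hσ : 0 ≤ σ) (hδ : 0 ≤ δ) (hγl : 0 < γl)
    (hγ : ∀ j, 1 ≤ j → j ≤ k → γl ≤ γ j)
    (hrec : ∀ j, 1 ≤ j → j ≤ k → γ j * η j ≤ α (j - 1) - (1 + σ) * α j + γ j * δ) :
    ∃ j, 1 ≤ j ∧ j ≤ k ∧
      η j ≤ (α 0 - (1 + σ) ^ k * α k) / (∑ i ∈ Finset.Icc 1 k, (1 + σ) ^ (i - 1) * γ i)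
        + δ := by
  have hσ1 : (0:ℝ) < 1 + σ := by linarith
  set S : ℝ := ∑ i ∈ Finset.Icc 1 k, (1 + σ) ^ (i - 1) * γ i with hSdef
  have hne : (Finset.Icc 1 k).Nonempty := ⟨1, by simp [hk]⟩
  have hpos : ∀ i ∈ Finset.Icc 1 k, 0 < (1 + σ) ^ (i - 1) * γ i := by
    intro i hi
    rw [Finset.mem_Icc] at hi
    exact mul_pos (pow_pos hσ1 _) (lt_of_lt_of_le hγl (hγ i hi.1 hi.2))
  have hS : 0 < S := Finset.sum_pos hpos hne
  obtain ⟨j₀, hj₀mem, hmin⟩ := Finset.exists_min_image (Finset.Icc 1 k) η hne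
  rw [Finset.mem_Icc] at hj₀mem
  refine ⟨j₀, hj₀mem.1, hj₀mem.2, ?_⟩
  -- telescoping sum
  have htel : ∑ i ∈ Finset.Icc 1 k, (1 + σ) ^ (i - 1) * (α (i - 1) - (1 + σ) * α i)
      = α 0 - (1 + σ) ^ k * α k := by
    rw [show Finset.Icc 1 k = Finset.Ico 1 (k+1) from (Finset.Ico_add_one_right_eq_Icc 1 k).symm,
      Finset.sum_Ico_eq_sum_range]
    have : ∀ i ∈ Finset.range (k + 1 - 1),
        (1 + σ) ^ (1 + i - 1) * (α (1 + i - 1) - (1 + σ) * α (1 + i))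
        = (1 + σ) ^ i * α i - (1 + σ) ^ (i + 1) * α (i + 1) := by
      intro i _
      have h1 : 1 + i - 1 = i := by omega
      rw [h1]
      have h2 : 1 + i = i + 1 := by omega
      rw [h2]
      ring
    rw [Finset.sum_congr rfl this]
    have := Finset.sum_range_sub' (fun i => (1 + σ) ^ i * α i) (k + 1 - 1)
    simp only [pow_zero, one_mul] at this
    rw [this]
    congr 2 <;> omega
  have hsum : S * η j₀ ≤ (α 0 - (1 + σ) ^ k * α k) + δ * S := by
    have h1 : S * η j₀ ≤ ∑ i ∈ Finset.Icc 1 k, (1 + σ) ^ (i - 1) * γ i * η i := by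
      rw [hSdef, Finset.sum_mul]
      apply Finset.sum_le_sum
      intro i hi
      exact mul_le_mul_of_nonneg_left (hmin i hi) (le_of_lt (hpos i hi))
    have h2 : ∑ i ∈ Finset.Icc 1 k, (1 + σ) ^ (i - 1) * γ i * η i
        ≤ ∑ i ∈ Finset.Icc 1 k, (1 + σ) ^ (i - 1) * (α (i - 1) - (1 + σ) * α i + γ i * δ) := by
      apply Finset.sum_le_sum
      intro i hi
      rw [Finset.mem_Icc] at hi
      have := hrec i hi.1 hi.2
      have hp : (0:ℝ) ≤ (1 + σ) ^ (i - 1) := le_of_lt (pow_pos hσ1 _)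
      calc (1 + σ) ^ (i - 1) * γ i * η i = (1 + σ) ^ (i - 1) * (γ i * η i) := by ring
        _ ≤ (1 + σ) ^ (i - 1) * (α (i - 1) - (1 + σ) * α i + γ i * δ) :=
          mul_le_mul_of_nonneg_left this hp
    have h3 : ∑ i ∈ Finset.Icc 1 k, (1 + σ) ^ (i - 1) * (α (i - 1) - (1 + σ) * α i + γ i * δ)
        = (α 0 - (1 + σ) ^ k * α k) + δ * S := by
      rw [hSdef, Finset.mul_sum, ← htel, ← Finset.sum_add_distrib]
      apply Finset.sum_congr rfl
      intro i _
      ring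
    linarith
  rw [← sub_le_iff_le_add, le_div_iff₀ hS]
  nlinarith
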